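/- arXiv:1301.6321 — 2 statements merged into one kernel-verified Lean document; each statement's English description precedes it below -/
import Mathlib

section
/- Assume hypothesis (EC). Let τ ∈ [0,T) and r ≥ 0. Then the optimal norm problem (NP)^{τ,r} has an optimal control, and M(τ,r) ≤ M^τ; moreover, if r < r_T then M(τ,r) > 0. -/
open MeasureTheory Set Filter Topology

noncomputable section

variable {H : Type*} [NormedAddCommGroup H] [InnerProductSpace ℂ H] [CompleteSpace H]
  [SecondCountableTopology H]

/-- `U` is a strongly continuous one-parameter group of unitary operators on `H`,
abstracting the Schrödinger group `e^{-iΔt}`. -/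
def IsUnitaryGroup (U : ℝ → H →L[ℂ] H) : Prop :=
  U 0 = ContinuousLinearMap.id ℂ H ∧
  (∀ s t : ℝ, U (s + t) = (U s).comp (U t)) ∧
  (∀ (t : ℝ) (x : H), ‖U t x‖ = ‖x‖) ∧
  ∀ x : H, Continuous fun t : ℝ => U t x

/-- `B` is a nonzero orthogonal projection on `H`, abstracting multiplication by `χ_ω`. -/
def IsOrthProj (B : H →L[ℂ] H) : Prop :=
  B ≠ 0 ∧ B.comp B = B ∧ ∀ x y : H, (inner ℂ (B x) y : ℂ) = inner ℂ x (B y)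

/-- Membership in `L∞((a,b);H)`. -/
def MemLinfty (u : ℝ → H) (a b : ℝ) : Prop :=
  AEStronglyMeasurable u (volume : Measure ℝ) ∧
    ∃ c : ℝ, ∀ᵐ t : ℝ ∂volume, t ∈ Ioo a b → ‖u t‖ ≤ c

/-- Membership in `L∞((0,∞);H)`. -/
def MemLinftyInf (u : ℝ → H) : Prop :=
  AEStronglyMeasurable u (volume : Measure ℝ) ∧
    ∃ c : ℝ, ∀ᵐ t : ℝ ∂volume, t ∈ Ioi (0 : ℝ) → ‖u t‖ ≤ c

/-- The `L∞((a,b);H)` norm of `u`. -/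
def supNorm (u : ℝ → H) (a b : ℝ) : ℝ :=
  sInf {c : ℝ | 0 ≤ c ∧ ∀ᵐ t : ℝ ∂volume, t ∈ Ioo a b → ‖u t‖ ≤ c}

/-- `stateT U B T τ u y₀ = y(T; χ_{(τ,T)}u, y₀)`, the mild solution at time `T` of the
controlled Schrödinger equation with initial state `y₀`, the control acting on `(τ,T)`:
`y(T) = U(T)y₀ + ∫_τ^T U(T-s) B u(s) ds`.  The free state at time `t` starting from `y₀`
with control `u` active from time `0` is `stateT U B t 0 u y₀`. -/
def stateT (U : ℝ → H →L[ℂ] H) (B : H →L[ℂ] H) (T τ : ℝ) (u : ℝ → H) (y₀ : H) : H :=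
  U T y₀ + ∫ s in Ioo τ T, U (T - s) (B (u s))

/-- Hypothesis (EC): `L∞`-exact controllability with cost. -/
def EC (U : ℝ → H →L[ℂ] H) (B : H →L[ℂ] H) : Prop :=
  ∀ τ : ℝ, 0 < τ → ∃ C : ℝ, 0 < C ∧ ∀ y₀ z : H, ∃ u : ℝ → H,
    AEStronglyMeasurable u (volume : Measure ℝ) ∧
    (∀ᵐ t : ℝ ∂volume, t ∈ Ioo 0 τ → ‖u t‖ ≤ C * ‖z - U τ y₀‖) ∧
    stateT U B τ 0 u y₀ = z

/-- Hypothesis (UC): unique continuation. -/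
def UC (U : ℝ → H →L[ℂ] H) (B : H →L[ℂ] H) : Prop :=
  ∀ η : H, η ≠ 0 → volume {t : ℝ | B (U t η) = 0} = 0

/-- The admissible set `U_M` of the minimal time problem `(TOCP)_M`. -/
def UMset (U : ℝ → H →L[ℂ] H) (B : H →L[ℂ] H) (y₀ : H) (M : ℝ) : Set (ℝ → H) :=
  {u | MemLinftyInf u ∧ (∀ᵐ t : ℝ ∂volume, t ∈ Ioi (0 : ℝ) → ‖u t‖ ≤ M) ∧
    ∃ s : ℝ, 0 < s ∧ stateT U B s 0 u y₀ = 0}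

/-- The minimal time `T_M` of `(TOCP)_M`. -/
def Tmin (U : ℝ → H →L[ℂ] H) (B : H →L[ℂ] H) (y₀ : H) (M : ℝ) : ℝ :=
  sInf {s : ℝ | 0 < s ∧ ∃ u ∈ UMset U B y₀ M, stateT U B s 0 u y₀ = 0}

/-- The admissible set `V_T` of the minimal norm problem `(NOCP)_T`. -/
def VTset (U : ℝ → H →L[ℂ] H) (B : H →L[ℂ] H) (y₀ : H) (T : ℝ) : Set (ℝ → H) :=
  {v | MemLinfty v 0 T ∧ stateT U B T 0 v y₀ = 0}

/-- The minimal norm `M_T` of `(NOCP)_T`. -/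
def Mmin (U : ℝ → H →L[ℂ] H) (B : H →L[ℂ] H) (y₀ : H) (T : ℝ) : ℝ :=
  sInf ((fun v : ℝ → H => supNorm v 0 T) '' VTset U B y₀ T)

/-- Hypothesis (BB): bang-bang property of the minimal time problems. -/
def BB (U : ℝ → H →L[ℂ] H) (B : H →L[ℂ] H) : Prop :=
  ∀ y₀ : H, y₀ ≠ 0 → ∀ M : ℝ, 0 < M → ∀ u ∈ UMset U B y₀ M,
    stateT U B (Tmin U B y₀ M) 0 u y₀ = 0 →
    ∀ᵐ t : ℝ ∂volume, t ∈ Ioo 0 (Tmin U B y₀ M) → ‖u t‖ = M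

/-- Hypothesis (ET): existence of optimal controls for the minimal time problems. -/
def ET (U : ℝ → H →L[ℂ] H) (B : H →L[ℂ] H) : Prop :=
  ∀ y₀ : H, y₀ ≠ 0 → ∀ M : ℝ, 0 < M →
    ∃ u ∈ UMset U B y₀ M, stateT U B (Tmin U B y₀ M) 0 u y₀ = 0

/-- The admissible set `U_{M,τ}`. -/
def UadmSet (M τ T : ℝ) : Set (ℝ → H) :=
  {u | MemLinfty u 0 T ∧ ∀ᵐ t : ℝ ∂volume, t ∈ Ioo τ T → ‖u t‖ ≤ M}

/-- The optimal distance `r(M,τ)` of the optimal target problem `(OP)^{M,τ}`. -/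
def rOP (U : ℝ → H →L[ℂ] H) (B : H →L[ℂ] H) (y₀ z_d : H) (T M τ : ℝ) : ℝ :=
  sInf ((fun u : ℝ → H => ‖stateT U B T τ u y₀ - z_d‖) '' UadmSet M τ T)

/-- `u` is an optimal control to `(OP)^{M,τ}`. -/
def IsOptOP (U : ℝ → H →L[ℂ] H) (B : H →L[ℂ] H) (y₀ z_d : H) (T M τ : ℝ) (u : ℝ → H) :
    Prop :=
  u ∈ UadmSet M τ T ∧ ‖stateT U B T τ u y₀ - z_d‖ = rOP U B y₀ z_d T M τ

/-- `M^τ`, the minimal norm for exact steering to the target `z_d`. -/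
def Mtau (U : ℝ → H →L[ℂ] H) (B : H →L[ℂ] H) (y₀ z_d : H) (T τ : ℝ) : ℝ :=
  sInf ((fun u : ℝ → H => supNorm u τ T) ''
    {u : ℝ → H | MemLinfty u 0 T ∧ stateT U B T τ u y₀ = z_d})

/-- The admissible set `W_{τ,r}` of the optimal norm problem `(NP)^{τ,r}`. -/
def WadmSet (U : ℝ → H →L[ℂ] H) (B : H →L[ℂ] H) (y₀ z_d : H) (T τ r : ℝ) :
    Set (ℝ → H) :=
  {u | MemLinfty u 0 T ∧ ‖stateT U B T τ u y₀ - z_d‖ ≤ r}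

/-- The optimal norm `M(τ,r)` of `(NP)^{τ,r}`. -/
def MNP (U : ℝ → H →L[ℂ] H) (B : H →L[ℂ] H) (y₀ z_d : H) (T τ r : ℝ) : ℝ :=
  sInf ((fun u : ℝ → H => supNorm u τ T) '' WadmSet U B y₀ z_d T τ r)

/-- `u` is an optimal control to `(NP)^{τ,r}`. -/
def IsOptNP (U : ℝ → H →L[ℂ] H) (B : H →L[ℂ] H) (y₀ z_d : H) (T τ r : ℝ) (u : ℝ → H) :
    Prop :=
  u ∈ WadmSet U B y₀ z_d T τ r ∧ supNorm u τ T = MNP U B y₀ z_d T τ r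

/-- The admissible set `V_{M,r}` of the second type optimal time problem `(TP)^{M,r}`. -/
def VadmSet (U : ℝ → H →L[ℂ] H) (B : H →L[ℂ] H) (y₀ z_d : H) (T M r : ℝ) :
    Set (ℝ → H) :=
  {u | ∃ τ : ℝ, τ ∈ Ico (0 : ℝ) T ∧ u ∈ UadmSet M τ T ∧
    ‖stateT U B T τ u y₀ - z_d‖ ≤ r}

/-- `τ_{M,r}(u)`. -/
def tauOf (U : ℝ → H →L[ℂ] H) (B : H →L[ℂ] H) (y₀ z_d : H) (T r : ℝ) (u : ℝ → H) : ℝ :=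
  sSup {τ : ℝ | τ ∈ Ico (0 : ℝ) T ∧ ‖stateT U B T τ u y₀ - z_d‖ ≤ r}

/-- The optimal time `τ(M,r)` of `(TP)^{M,r}`. -/
def tauTP (U : ℝ → H →L[ℂ] H) (B : H →L[ℂ] H) (y₀ z_d : H) (T M r : ℝ) : ℝ :=
  sSup (tauOf U B y₀ z_d T r '' VadmSet U B y₀ z_d T M r)

/-- `u` is an optimal control to `(TP)^{M,r}`. -/
def IsOptTP (U : ℝ → H →L[ℂ] H) (B : H →L[ℂ] H) (y₀ z_d : H) (T M r : ℝ) (u : ℝ → H) :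
    Prop :=
  u ∈ VadmSet U B y₀ z_d T M r ∧
    ‖stateT U B T (tauTP U B y₀ z_d T M r) u y₀ - z_d‖ ≤ r

/-- The adjoint state `φ*(t) = U(t-T)(z_d - y(T; χ_{(τ,T)}u, y₀))`. -/
def adjState (U : ℝ → H →L[ℂ] H) (B : H →L[ℂ] H) (y₀ z_d : H) (T τ : ℝ) (u : ℝ → H)
    (t : ℝ) : H :=
  U (t - T) (z_d - stateT U B T τ u y₀)


namespace NPAux

lemma orthProj_norm_le {B : H →L[ℂ] H} (hB : IsOrthProj B) (x : H) : ‖B x‖ ≤ ‖x‖ := by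
  obtain ⟨-, hBB, hsym⟩ := hB
  have h2 : B (B x) = B x := by
    have := congrArg (fun f : H →L[ℂ] H => f x) hBB
    simpa using this
  have h1 : (inner ℂ (B x) (B x) : ℂ) = inner ℂ x (B x) := by
    rw [hsym, h2]
  have h3 : ((‖B x‖ : ℝ) : ℂ) ^ 2 = inner ℂ x (B x) := by
    rw [← h1, inner_self_eq_norm_sq_to_K]
    norm_num
  have h4 : ‖(inner ℂ x (B x) : ℂ)‖ ≤ ‖x‖ * ‖B x‖ := norm_inner_le_norm x (B x)
  have h5 : ‖B x‖ ^ 2 ≤ ‖x‖ * ‖B x‖ := by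
    calc ‖B x‖ ^ 2 = ‖((‖B x‖ : ℝ) : ℂ) ^ 2‖ := by
          rw [norm_pow]; simp
      _ = ‖(inner ℂ x (B x) : ℂ)‖ := by rw [h3]
      _ ≤ ‖x‖ * ‖B x‖ := h4
  nlinarith [norm_nonneg (B x), norm_nonneg x]

lemma unitary_continuous₂ {U : ℝ → H →L[ℂ] H} (hU : IsUnitaryGroup U) :
    Continuous fun p : ℝ × H => U p.1 p.2 := by
  obtain ⟨h0, hadd, hnorm, hcont⟩ := hU
  rw [continuous_iff_continuousAt]
  rintro ⟨t₀, x₀⟩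
  have key : ∀ p : ℝ × H, ‖U p.1 p.2 - U t₀ x₀‖ ≤ ‖p.2 - x₀‖ + ‖U p.1 x₀ - U t₀ x₀‖ := by
    rintro ⟨t, x⟩
    have hdecomp : U t x - U t₀ x₀ = U t (x - x₀) + (U t x₀ - U t₀ x₀) := by
      rw [map_sub]; abel
    rw [hdecomp]
    exact (norm_add_le _ _).trans (by rw [hnorm])
  have T1 : Tendsto (fun p : ℝ × H => ‖p.2 - x₀‖ + ‖U p.1 x₀ - U t₀ x₀‖)
      (𝓝 (t₀, x₀)) (𝓝 0) := by
    have c1 : Continuous fun p : ℝ × H => ‖p.2 - x₀‖ :=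
      (continuous_snd.sub continuous_const).norm
    have c2 : Continuous fun p : ℝ × H => ‖U p.1 x₀ - U t₀ x₀‖ :=
      (((hcont x₀).comp continuous_fst).sub continuous_const).norm
    exact (c1.add c2).tendsto' (t₀, x₀) 0 (by simp)
  have hT : Tendsto (fun p : ℝ × H => ‖U p.1 p.2 - U t₀ x₀‖) (𝓝 (t₀, x₀)) (𝓝 0) :=
    squeeze_zero (fun p => norm_nonneg _) key T1
  rw [ContinuousAt]
  exact tendsto_iff_norm_sub_tendsto_zero.2 hT

lemma aesm_integrand {U : ℝ → H →L[ℂ] H} (hU : IsUnitaryGroup U) (B : H →L[ℂ] H)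
    {v : ℝ → H} (ν : Measure ℝ) (hv : AEStronglyMeasurable v ν) (T : ℝ) :
    AEStronglyMeasurable (fun s => U (T - s) (B (v s))) ν := by
  have hBv : AEStronglyMeasurable (fun s => B (v s)) ν :=
    B.continuous.comp_aestronglyMeasurable hv
  have hpair : AEStronglyMeasurable (fun s => ((T - s, B (v s)) : ℝ × H)) ν :=
    ((continuous_const.sub continuous_id).aestronglyMeasurable).prodMk hBv
  exact (unitary_continuous₂ hU).comp_aestronglyMeasurable hpair

lemma supNorm_nonneg (u : ℝ → H) (a b : ℝ) : 0 ≤ supNorm u a b :=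
  Real.sInf_nonneg fun _ hc => hc.1

lemma exists_exact_control {U : ℝ → H →L[ℂ] H} {B : H →L[ℂ] H} (hU : IsUnitaryGroup U)
    (hEC : EC U B) {T τ : ℝ} (hτT : τ < T) (y₀ z_d : H) :
    ∃ u : ℝ → H, MemLinfty u 0 T ∧ stateT U B T τ u y₀ = z_d := by
  have hσ : 0 < T - τ := sub_pos.2 hτT
  obtain ⟨C, hC, hall⟩ := hEC (T - τ) hσ
  obtain ⟨u₀, hmeas, hbd, hst⟩ := hall (U τ y₀) z_d
  set c₀ := C * ‖z_d - U (T - τ) (U τ y₀)‖ with hc₀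
  refine ⟨(Ioo τ T).indicator (fun s => u₀ (s - τ)), ⟨?_, ?_⟩, ?_⟩
  · exact (hmeas.comp_quasiMeasurePreserving
      (measurePreserving_sub_right volume τ).quasiMeasurePreserving).indicator measurableSet_Ioo
  · refine ⟨max c₀ 0, ?_⟩
    have h2 : ∀ᵐ t : ℝ ∂volume, t - τ ∈ Ioo 0 (T - τ) → ‖u₀ (t - τ)‖ ≤ c₀ :=
      (measurePreserving_sub_right volume τ).quasiMeasurePreserving.ae hbd
    filter_upwards [h2] with t ht _
    by_cases hmem : t ∈ Ioo τ T
    · rw [Set.indicator_of_mem hmem]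
      have hm2 : t - τ ∈ Ioo 0 (T - τ) := ⟨by linarith [hmem.1], by linarith [hmem.2]⟩
      exact (ht hm2).trans (le_max_left _ _)
    · rw [Set.indicator_of_notMem hmem]; simp
  · have hUTy : U T y₀ = U (T - τ) (U τ y₀) := by
      have h := hU.2.1 (T - τ) τ
      rw [sub_add_cancel] at h
      rw [h]; rfl
    have hstep1 : (∫ s in Ioo τ T, U (T - s) (B ((Ioo τ T).indicator (fun s' => u₀ (s' - τ)) s)) : H)
        = ∫ s in Ioo τ T, U (T - s) (B (u₀ (s - τ))) := by
      refine setIntegral_congr_fun measurableSet_Ioo fun s hs => ?_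
      rw [Set.indicator_of_mem hs]
    have hstep2 : (∫ s in Ioo τ T, U (T - s) (B (u₀ (s - τ))))
        = ∫ s in Ioo 0 (T - τ), U ((T - τ) - s) (B (u₀ s)) := by
      have hemb : MeasurableEmbedding (fun x : ℝ => x + τ) :=
        (MeasurableEquiv.addRight τ).measurableEmbedding
      have hmp : MeasurePreserving (fun x : ℝ => x + τ) volume volume :=
        measurePreserving_add_right volume τ
      have h : (∫ x in (fun x : ℝ => x + τ) ⁻¹' (Ioo τ T), U (T - (x + τ)) (B (u₀ (x + τ - τ))) : H)
          = ∫ s in Ioo τ T, U (T - s) (B (u₀ (s - τ))) :=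
        hmp.setIntegral_preimage_emb hemb (fun s => U (T - s) (B (u₀ (s - τ)))) (Ioo τ T)
      have hset : (fun x : ℝ => x + τ) ⁻¹' (Ioo τ T) = Ioo 0 (T - τ) := by
        rw [Set.preimage_add_const_Ioo]
        norm_num
      rw [hset] at h
      refine h.symm.trans ?_
      refine setIntegral_congr_fun measurableSet_Ioo fun s hs => ?_
      rw [add_sub_cancel_right, show T - (s + τ) = T - τ - s by ring]
    unfold stateT at hst ⊢
    rw [hstep1, hstep2, hUTy]
    exact hst

end NPAux

set_option maxHeartbeats 2000000 in
theorem np_has_optimal_control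
    (U : ℝ → H →L[ℂ] H) (B : H →L[ℂ] H) (hU : IsUnitaryGroup U) (hB : IsOrthProj B)
    (hEC : EC U B) (hECrev : EC (fun t => U (-t)) B)
    (T : ℝ) (hT : 0 < T) (y₀ z_d : H) (hrT : 0 < ‖U T y₀ - z_d‖)
    (τ r : ℝ) (hτ : τ ∈ Ico (0 : ℝ) T) (hr : 0 ≤ r) :
    (∃ u : ℝ → H, u ∈ WadmSet U B y₀ z_d T τ r ∧ supNorm u τ T = MNP U B y₀ z_d T τ r) ∧
    MNP U B y₀ z_d T τ r ≤ Mtau U B y₀ z_d T τ ∧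
    (r < ‖U T y₀ - z_d‖ → 0 < MNP U B y₀ z_d T τ r) := by
  classical
  obtain ⟨hτ0, hτT⟩ := hτ
  have hTτ : 0 < T - τ := sub_pos.2 hτT
  have hUnorm := hU.2.2.1
  set μ : Measure ℝ := volume.restrict (Ioo τ T) with hμdef
  haveI hfin : IsFiniteMeasure μ := by
    constructor
    rw [hμdef, Measure.restrict_apply_univ, Real.volume_Ioo]
    exact ENNReal.ofReal_lt_top
  have hsubIoo : Ioo τ T ⊆ Ioo 0 T := Ioo_subset_Ioo hτ0 le_rfl
  have hstate : ∀ u : ℝ → H,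
      stateT U B T τ u y₀ = U T y₀ + ∫ s, U (T - s) (B (u s)) ∂μ := by
    intro u
    rw [hμdef]
    rfl
  have hΨle : ∀ (v : ℝ → H) (c : ℝ), (∀ᵐ s ∂μ, ‖v s‖ ≤ c) →
      ‖(∫ s, U (T - s) (B (v s)) ∂μ : H)‖ ≤ c * (T - τ) := by
    intro v c hb
    have hb' : ∀ᵐ s ∂(volume.restrict (Ioo τ T)), ‖U (T - s) (B (v s))‖ ≤ c := by
      rw [← hμdef]
      filter_upwards [hb] with s hs
      rw [hUnorm]
      exact (NPAux.orthProj_norm_le hB _).trans hs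
    have h : ‖(∫ s in Ioo τ T, U (T - s) (B (v s)) : H)‖ ≤ c * (volume (Ioo τ T)).toReal :=
      norm_setIntegral_le_of_norm_le_const_ae
        (by rw [Real.volume_Ioo]; exact ENNReal.ofReal_lt_top) hb'
    rw [Real.volume_Ioo, ENNReal.toReal_ofReal hTτ.le] at h
    rw [hμdef]
    exact h
  obtain ⟨ue, hueL, hueSt⟩ := NPAux.exists_exact_control hU hEC hτT y₀ z_d
  have hWne : (WadmSet U B y₀ z_d T τ r).Nonempty := by
    refine ⟨ue, hueL, ?_⟩
    rw [hueSt]; simpa using hr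
  have himne : ((fun u : ℝ → H => supNorm u τ T) '' WadmSet U B y₀ z_d T τ r).Nonempty :=
    hWne.image _
  have hbddb : BddBelow ((fun u : ℝ → H => supNorm u τ T) '' WadmSet U B y₀ z_d T τ r) := by
    refine ⟨0, ?_⟩; rintro b ⟨u, -, rfl⟩; exact NPAux.supNorm_nonneg u τ T
  have hMNP_eq : MNP U B y₀ z_d T τ r
      = sInf ((fun u : ℝ → H => supNorm u τ T) '' WadmSet U B y₀ z_d T τ r) := rfl
  have hMNP0 : 0 ≤ MNP U B y₀ z_d T τ r := by
    rw [hMNP_eq]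
    exact le_csInf himne (by rintro b ⟨u, -, rfl⟩; exact NPAux.supNorm_nonneg u τ T)
  have claim2 : MNP U B y₀ z_d T τ r ≤ Mtau U B y₀ z_d T τ := by
    rw [hMNP_eq]
    refine csInf_le_csInf hbddb ?_ ?_
    · exact ⟨supNorm ue τ T, ue, ⟨hueL, hueSt⟩, rfl⟩
    · rintro b ⟨u, ⟨h1, h2⟩, rfl⟩
      exact ⟨u, ⟨h1, by rw [h2]; simpa using hr⟩, rfl⟩
  have keylow : ∀ u ∈ WadmSet U B y₀ z_d T τ r,
      (‖U T y₀ - z_d‖ - r) / (T - τ) ≤ supNorm u τ T := by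
    rintro u ⟨⟨hmeas, c₁, hc₁⟩, hres⟩
    have hcsetne : {c : ℝ | 0 ≤ c ∧ ∀ᵐ t : ℝ ∂volume, t ∈ Ioo τ T → ‖u t‖ ≤ c}.Nonempty := by
      refine ⟨max c₁ 0, le_max_right _ _, ?_⟩
      filter_upwards [hc₁] with t ht hmem
      exact (ht (hsubIoo hmem)).trans (le_max_left _ _)
    unfold supNorm
    refine le_csInf hcsetne ?_
    rintro c ⟨hc0, hcbd⟩
    have hbd' : ∀ᵐ s ∂μ, ‖u s‖ ≤ c := by
      rw [hμdef]
      exact (ae_restrict_iff' measurableSet_Ioo).2 hcbd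
    have hnint := hΨle u c hbd'
    have hsplit : ‖U T y₀ - z_d‖ ≤ r + c * (T - τ) := by
      have hid : U T y₀ - z_d
          = (stateT U B T τ u y₀ - z_d) - (∫ s, U (T - s) (B (u s)) ∂μ : H) := by
        rw [hstate u]; abel
      calc ‖U T y₀ - z_d‖
          ≤ ‖stateT U B T τ u y₀ - z_d‖ + ‖(∫ s, U (T - s) (B (u s)) ∂μ : H)‖ := by
            rw [hid]; exact norm_sub_le _ _
        _ ≤ r + c * (T - τ) := add_le_add hres hnint
    rw [div_le_iff₀ hTτ]
    linarith
  have claim3 : r < ‖U T y₀ - z_d‖ → 0 < MNP U B y₀ z_d T τ r := by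
    intro hrlt
    have hpos : 0 < (‖U T y₀ - z_d‖ - r) / (T - τ) := div_pos (by linarith) hTτ
    refine lt_of_lt_of_le hpos ?_
    rw [hMNP_eq]
    exact le_csInf himne (by rintro b ⟨u, hu, rfl⟩; exact keylow u hu)
  refine ⟨?_, claim2, claim3⟩
  rcases le_or_gt ‖U T y₀ - z_d‖ r with hcase | hcase
  · have hst0 : stateT U B T τ (fun _ : ℝ => (0:H)) y₀ = U T y₀ := by
      unfold stateT; simp
    have hmem0 : (fun _ : ℝ => (0:H)) ∈ WadmSet U B y₀ z_d T τ r := by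
      refine ⟨⟨aestronglyMeasurable_const, 0, Eventually.of_forall fun t _ => by simp⟩, ?_⟩
      rw [hst0]; exact hcase
    have hsup0 : supNorm (fun _ : ℝ => (0:H)) τ T ≤ 0 := by
      unfold supNorm
      exact csInf_le ⟨0, fun c hc => hc.1⟩ ⟨le_rfl, Eventually.of_forall fun t _ => by simp⟩
    refine ⟨fun _ => 0, hmem0, le_antisymm (hsup0.trans hMNP0) ?_⟩
    rw [hMNP_eq]
    exact csInf_le hbddb ⟨_, hmem0, rfl⟩
  · -- main case : r < r_T
    set Mv := MNP U B y₀ z_d T τ r with hMvdef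
    have hMv : 0 < Mv := claim3 hcase
    have hrTpos : 0 < ‖U T y₀ - z_d‖ := hrT
    have hδpos : ∀ n : ℕ, 0 < 1 / ((n:ℝ) + 1) := fun n => by positivity
    have hδle : ∀ {a b : ℕ}, a ≤ b → 1/((b:ℝ)+1) ≤ 1/((a:ℝ)+1) := by
      intro a b h
      apply one_div_le_one_div_of_le (by positivity)
      have : (a:ℝ) ≤ (b:ℝ) := Nat.cast_le.2 h
      linarith
    set S : ℕ → Set (Lp H 2 μ) := fun n =>
      {f : Lp H 2 μ | (∀ᵐ s ∂μ, ‖f s‖ ≤ Mv) ∧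
        ‖U T y₀ + (∫ s, U (T - s) (B (f s)) ∂μ) - z_d‖ ≤ r + 1 / ((n:ℝ) + 1)} with hSdef
    have hSmem : ∀ (n : ℕ) (f : Lp H 2 μ), f ∈ S n ↔
        ((∀ᵐ s ∂μ, ‖f s‖ ≤ Mv) ∧
        ‖U T y₀ + (∫ s, U (T - s) (B (f s)) ∂μ) - z_d‖ ≤ r + 1 / ((n:ℝ) + 1)) := by
      intro n f
      rw [hSdef]
      exact Iff.rfl
    have hInt : ∀ (v : ℝ → H) (c : ℝ), AEStronglyMeasurable v μ → (∀ᵐ s ∂μ, ‖v s‖ ≤ c) →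
        Integrable (fun s => U (T - s) (B (v s))) μ := by
      intro v c hm hb
      refine Integrable.mono' (integrable_const c) (NPAux.aesm_integrand hU B μ hm T) ?_
      filter_upwards [hb] with s hs
      rw [hUnorm]; exact (NPAux.orthProj_norm_le hB _).trans hs
    have hSne : ∀ n : ℕ, (S n).Nonempty := by
      intro n
      set ε := Mv * (1 / ((n:ℝ)+1)) / ‖U T y₀ - z_d‖ with hεdef
      have hε : 0 < ε := by
        rw [hεdef]; exact div_pos (mul_pos hMv (hδpos n)) hrTpos
      obtain ⟨b, ⟨u, huW, rfl⟩, hblt⟩ := exists_lt_of_csInf_lt himne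
        (by rw [← hMNP_eq]; exact lt_add_of_pos_right Mv hε)
      obtain ⟨⟨humeas, c₁, hc₁⟩, hres⟩ := huW
      have hcsetne : {c : ℝ | 0 ≤ c ∧ ∀ᵐ t : ℝ ∂volume, t ∈ Ioo τ T → ‖u t‖ ≤ c}.Nonempty := by
        refine ⟨max c₁ 0, le_max_right _ _, ?_⟩
        filter_upwards [hc₁] with t ht hmem
        exact (ht (hsubIoo hmem)).trans (le_max_left _ _)
      have hblt' : sInf {c : ℝ | 0 ≤ c ∧ ∀ᵐ t : ℝ ∂volume, t ∈ Ioo τ T → ‖u t‖ ≤ c}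
          < Mv + ε := hblt
      obtain ⟨c, ⟨hc0, hcbd⟩, hclt⟩ := exists_lt_of_csInf_lt hcsetne hblt'
      set lam := Mv / max c Mv with hlamdef
      have hmaxpos : 0 < max c Mv := lt_max_of_lt_right hMv
      have hlam0 : 0 < lam := by rw [hlamdef]; exact div_pos hMv hmaxpos
      have hlam1 : lam ≤ 1 := by
        rw [hlamdef]; exact div_le_one_of_le₀ (le_max_right _ _) hmaxpos.le
      have hcμ : ∀ᵐ s ∂μ, ‖u s‖ ≤ c := by
        rw [hμdef]
        exact (ae_restrict_iff' measurableSet_Ioo).2 hcbd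
      have hgbd : ∀ᵐ s ∂μ, ‖lam • u s‖ ≤ Mv := by
        filter_upwards [hcμ] with s hs
        rw [norm_smul, Real.norm_of_nonneg hlam0.le]
        calc lam * ‖u s‖ ≤ lam * max c Mv :=
              mul_le_mul_of_nonneg_left (hs.trans (le_max_left _ _)) hlam0.le
          _ = Mv := by rw [hlamdef]; field_simp
      have hgmeas : AEStronglyMeasurable (fun s => lam • u s) μ := by
        rw [hμdef]
        exact (humeas.restrict).const_smul lam
      have hgmem : MemLp (fun s => lam • u s) 2 μ := MemLp.of_bound hgmeas Mv hgbd
      have hIntu : Integrable (fun s => U (T - s) (B (u s))) μ :=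
        hInt u c (by rw [hμdef]; exact humeas.restrict) hcμ
      refine ⟨hgmem.toLp _, (hSmem n _).2 ⟨?_, ?_⟩⟩
      · filter_upwards [hgmem.coeFn_toLp, hgbd] with s h1 h2
        rw [h1]; exact h2
      · have hΨeq : (∫ s, U (T - s) (B ((hgmem.toLp _) s)) ∂μ : H)
            = lam • ∫ s, U (T - s) (B (u s)) ∂μ := by
          have h1 : (fun s => U (T - s) (B ((hgmem.toLp _) s)))
              =ᵐ[μ] fun s => U (T - s) (B (lam • u s)) := by
            filter_upwards [hgmem.coeFn_toLp] with s hs; rw [hs]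
          rw [integral_congr_ae h1]
          have h2 : ∀ s : ℝ, U (T - s) (B (lam • u s)) = lam • U (T - s) (B (u s)) := by
            intro s
            rw [B.map_smul_of_tower, (U (T - s)).map_smul_of_tower]
          simp_rw [h2]
          exact integral_smul lam _
        rw [hΨeq]
        have halg : U T y₀ + (lam • ∫ s, U (T - s) (B (u s)) ∂μ : H) - z_d
            = lam • (stateT U B T τ u y₀ - z_d) + (1 - lam) • (U T y₀ - z_d) := by
          rw [hstate u]
          module
        rw [halg]
        have hmaxlt : max c Mv < Mv + ε := max_lt hclt (lt_add_of_pos_right _ hε)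
        have h1lam : (1 - lam) * ‖U T y₀ - z_d‖ ≤ 1 / ((n:ℝ)+1) := by
          have e1 : 1 - lam = (max c Mv - Mv) / max c Mv := by
            rw [hlamdef]; field_simp
          have e2 : (max c Mv - Mv) / max c Mv ≤ ε / Mv :=
            div_le_div₀ hε.le (by linarith) hMv (le_max_right _ _)
          calc (1 - lam) * ‖U T y₀ - z_d‖ ≤ (ε / Mv) * ‖U T y₀ - z_d‖ := by
                refine mul_le_mul_of_nonneg_right ?_ (norm_nonneg _)
                rw [e1]; exact e2
            _ = 1 / ((n:ℝ)+1) := by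
                rw [hεdef]
                field_simp
        calc ‖lam • (stateT U B T τ u y₀ - z_d) + (1 - lam) • (U T y₀ - z_d)‖
            ≤ ‖lam • (stateT U B T τ u y₀ - z_d)‖ + ‖(1 - lam) • (U T y₀ - z_d)‖ :=
              norm_add_le _ _
          _ = lam * ‖stateT U B T τ u y₀ - z_d‖ + (1 - lam) * ‖U T y₀ - z_d‖ := by
              rw [norm_smul, norm_smul, Real.norm_of_nonneg hlam0.le,
                Real.norm_of_nonneg (by linarith)]
          _ ≤ 1 * r + (1 / ((n:ℝ)+1)) := by
              refine add_le_add ?_ h1lam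
              refine (mul_le_mul_of_nonneg_left hres hlam0.le).trans ?_
              exact mul_le_mul_of_nonneg_right hlam1 hr
          _ = r + 1 / ((n:ℝ)+1) := by ring
    have hSmid : ∀ (n : ℕ) (f g : Lp H 2 μ), f ∈ S n → g ∈ S n →
        ((2:ℝ)⁻¹ • (f + g)) ∈ S n := by
      intro n f g hf hg
      obtain ⟨hf1, hf2⟩ := (hSmem n f).1 hf
      obtain ⟨hg1, hg2⟩ := (hSmem n g).1 hg
      have hco : (((2:ℝ)⁻¹ • (f + g) : Lp H 2 μ) : ℝ → H)
          =ᵐ[μ] fun s => (2:ℝ)⁻¹ • (f s + g s) := by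
        filter_upwards [Lp.coeFn_smul ((2:ℝ)⁻¹) (f + g), Lp.coeFn_add f g] with s h1 h2
        rw [h1, Pi.smul_apply, h2, Pi.add_apply]
      have hIf : Integrable (fun s => U (T - s) (B (f s))) μ :=
        hInt _ Mv (Lp.aestronglyMeasurable f) hf1
      have hIg : Integrable (fun s => U (T - s) (B (g s))) μ :=
        hInt _ Mv (Lp.aestronglyMeasurable g) hg1
      refine (hSmem n _).2 ⟨?_, ?_⟩
      · filter_upwards [hco, hf1, hg1] with s h h1 h2
        rw [h, norm_smul, Real.norm_of_nonneg (by norm_num : (0:ℝ) ≤ (2:ℝ)⁻¹)]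
        calc (2:ℝ)⁻¹ * ‖f s + g s‖ ≤ (2:ℝ)⁻¹ * (‖f s‖ + ‖g s‖) :=
              mul_le_mul_of_nonneg_left (norm_add_le _ _) (by norm_num)
          _ ≤ (2:ℝ)⁻¹ * (Mv + Mv) :=
              mul_le_mul_of_nonneg_left (add_le_add h1 h2) (by norm_num)
          _ = Mv := by ring
      · have hΨmid : (∫ s, U (T - s) (B (((2:ℝ)⁻¹ • (f + g) : Lp H 2 μ) s)) ∂μ : H)
            = (2:ℝ)⁻¹ • ((∫ s, U (T - s) (B (f s)) ∂μ) + ∫ s, U (T - s) (B (g s)) ∂μ) := by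
          have h1 : (fun s => U (T - s) (B (((2:ℝ)⁻¹ • (f + g) : Lp H 2 μ) s)))
              =ᵐ[μ] fun s => (2:ℝ)⁻¹ • (U (T - s) (B (f s)) + U (T - s) (B (g s))) := by
            filter_upwards [hco] with s hs
            rw [hs, B.map_smul_of_tower, (U (T - s)).map_smul_of_tower, map_add, map_add]
          rw [integral_congr_ae h1, integral_smul, integral_add hIf hIg]
        rw [hΨmid]
        have halg : U T y₀ + ((2:ℝ)⁻¹ •
              ((∫ s, U (T - s) (B (f s)) ∂μ) + ∫ s, U (T - s) (B (g s)) ∂μ) : H) - z_d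
            = (2:ℝ)⁻¹ • ((U T y₀ + (∫ s, U (T - s) (B (f s)) ∂μ) - z_d)
                + (U T y₀ + (∫ s, U (T - s) (B (g s)) ∂μ) - z_d)) := by
          module
        rw [halg, norm_smul, Real.norm_of_nonneg (by norm_num : (0:ℝ) ≤ (2:ℝ)⁻¹)]
        calc (2:ℝ)⁻¹ * ‖(U T y₀ + (∫ s, U (T - s) (B (f s)) ∂μ) - z_d)
                + (U T y₀ + (∫ s, U (T - s) (B (g s)) ∂μ) - z_d)‖
            ≤ (2:ℝ)⁻¹ * ((r + 1 / ((n:ℝ)+1)) + (r + 1 / ((n:ℝ)+1))) :=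
              mul_le_mul_of_nonneg_left ((norm_add_le _ _).trans (add_le_add hf2 hg2))
                (by norm_num)
          _ = r + 1 / ((n:ℝ)+1) := by ring
    set K0 : ℝ := (measureUnivNNReal μ : ℝ) ^ ((2:ENNReal).toReal)⁻¹ * Mv with hK0def
    have hnormle : ∀ (n : ℕ), ∀ f ∈ S n, ‖f‖ ≤ K0 := by
      intro n f hf
      rw [hK0def]
      exact Lp.norm_le_of_ae_bound hMv.le ((hSmem n f).1 hf).1
    have hK00 : 0 ≤ K0 := by
      obtain ⟨f, hf⟩ := hSne 0
      exact (norm_nonneg f).trans (hnormle 0 f hf)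
    set Dn : ℕ → ℝ := fun n => sInf (norm '' S n) with hDndef
    have hDim_ne : ∀ n, (norm '' S n).Nonempty := fun n => (hSne n).image _
    have hDbb : ∀ n, BddBelow (norm '' S n) := by
      intro n; refine ⟨0, ?_⟩; rintro b ⟨f, -, rfl⟩; exact norm_nonneg f
    have hD0 : ∀ n, 0 ≤ Dn n := by
      intro n
      rw [hDndef]
      exact le_csInf (hDim_ne n) (by rintro b ⟨f, -, rfl⟩; exact norm_nonneg f)
    have hDleK : ∀ n, Dn n ≤ K0 := by
      intro n; obtain ⟨f, hf⟩ := hSne n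
      rw [hDndef]
      exact (csInf_le (hDbb n) ⟨f, hf, rfl⟩).trans (hnormle n f hf)
    have hSsub : ∀ {n m : ℕ}, n ≤ m → S m ⊆ S n := by
      intro n m h f hf
      obtain ⟨h1, h2⟩ := (hSmem m f).1 hf
      exact (hSmem n f).2 ⟨h1, h2.trans (add_le_add_right (hδle h) r)⟩
    have hDmono : Monotone Dn := by
      intro n m h
      rw [hDndef]
      exact csInf_le_csInf (hDbb n) ((hSne m).image _) (Set.image_mono (hSsub h))
    have hxn : ∀ n : ℕ, ∃ f, f ∈ S n ∧
        ‖f‖ ^ 2 ≤ Dn n ^ 2 + (2 * K0 + 1) * (1 / ((n:ℝ) + 1)) := by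
      intro n
      have hlt0 : sInf (norm '' S n) < Dn n + 1/((n:ℝ)+1) := by
        rw [hDndef]
        exact lt_add_of_pos_right _ (hδpos n)
      obtain ⟨b, ⟨f, hf, rfl⟩, hlt⟩ := exists_lt_of_csInf_lt (hDim_ne n) hlt0
      refine ⟨f, hf, ?_⟩
      have h1 : ‖f‖ < Dn n + 1/((n:ℝ)+1) := hlt
      have h2 : 1/((n:ℝ)+1) ≤ 1 := by
        rw [div_le_one (by positivity)]
        have hn0 : (0:ℝ) ≤ (n:ℝ) := Nat.cast_nonneg n
        linarith
      nlinarith [hD0 n, hDleK n, norm_nonneg f, hδpos n,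
        mul_le_mul_of_nonneg_right (hDleK n) (hδpos n).le]
    choose x hxS hxnorm using hxn
    have haBdd : BddAbove (Set.range fun n => Dn n ^ 2) := by
      refine ⟨K0 ^ 2, ?_⟩
      rintro b ⟨n, rfl⟩
      exact pow_le_pow_left₀ (hD0 n) (hDleK n) 2
    have haMono : Monotone fun n => Dn n ^ 2 := fun n m h =>
      pow_le_pow_left₀ (hD0 n) (hDmono h) 2
    have haCauchy : CauchySeq fun n => Dn n ^ 2 :=
      (tendsto_atTop_ciSup haMono haBdd).cauchySeq
    have hkey : ∀ n m : ℕ, n ≤ m → ‖x n - x m‖ ^ 2 ≤ 2 * (Dn m ^ 2 - Dn n ^ 2)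
        + 2 * ((2*K0+1) * (1/((n:ℝ)+1)) + (2*K0+1) * (1/((m:ℝ)+1))) := by
      intro n m hnm
      have hmid : ((2:ℝ)⁻¹ • (x n + x m)) ∈ S n := hSmid n _ _ (hxS n) (hSsub hnm (hxS m))
      have hmidn : Dn n ≤ ‖(2:ℝ)⁻¹ • (x n + x m)‖ := by
        rw [hDndef]
        exact csInf_le (hDbb n) ⟨_, hmid, rfl⟩
      have hpar := parallelogram_law_with_norm ℂ (x n) (x m)
      have hmidnorm : ‖(2:ℝ)⁻¹ • (x n + x m)‖ = 2⁻¹ * ‖x n + x m‖ := by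
        rw [norm_smul, Real.norm_of_nonneg (by norm_num : (0:ℝ) ≤ (2:ℝ)⁻¹)]
      have h4 : 2 * Dn n ≤ ‖x n + x m‖ := by
        rw [hmidnorm] at hmidn; linarith
      have hxn2 := hxnorm n
      have hxm2 := hxnorm m
      have hDnm : Dn n ≤ Dn m := hDmono hnm
      nlinarith [norm_nonneg (x n + x m), hD0 n,
        mul_le_mul h4 h4 (by linarith [hD0 n]) (norm_nonneg (x n + x m))]
    have hxCauchy : CauchySeq x := by
      rw [Metric.cauchySeq_iff]
      intro ε hε
      have h2K : (0:ℝ) < 2*K0+1 := by linarith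
      obtain ⟨N₁, hN₁⟩ := Metric.cauchySeq_iff'.1 haCauchy (ε^2/8) (by positivity)
      obtain ⟨N₂, hN₂⟩ := exists_nat_one_div_lt
        (div_pos (show (0:ℝ) < ε^2 by positivity) (by linarith : (0:ℝ) < 8*(2*K0+1)))
      have key2 : ∀ a b : ℕ, a ≤ b → max N₁ N₂ ≤ a → dist (x a) (x b) < ε := by
        intro a b hab ha
        have haN₁ : N₁ ≤ a := le_trans (le_max_left _ _) ha
        have haN₂ : N₂ ≤ a := le_trans (le_max_right _ _) ha
        have hbN₁ : N₁ ≤ b := le_trans haN₁ hab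
        have hd1 : Dn b ^ 2 - Dn a ^ 2 < ε^2/8 + ε^2/8 := by
          have e1 := hN₁ b hbN₁
          have e2 := hN₁ a haN₁
          rw [Real.dist_eq] at e1 e2
          have m1 : Dn N₁ ^ 2 ≤ Dn a ^ 2 := haMono haN₁
          have m2 : Dn N₁ ^ 2 ≤ Dn b ^ 2 := haMono hbN₁
          rw [abs_of_nonneg (by linarith)] at e1
          linarith
        have hγ : ∀ k : ℕ, N₂ ≤ k → (2*K0+1) * (1/((k:ℝ)+1)) < ε^2/8 := by
          intro k hk
          have e1 : 1/((k:ℝ)+1) ≤ 1/((N₂:ℝ)+1) := hδle hk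
          have e2 : (1:ℝ)/((N₂:ℝ)+1) < ε^2/(8*(2*K0+1)) := hN₂
          have e3 : (2*K0+1) * (1/((k:ℝ)+1)) < (2*K0+1) * (ε^2/(8*(2*K0+1))) :=
            mul_lt_mul_of_pos_left (lt_of_le_of_lt e1 e2) h2K
          have e4 : (2*K0+1) * (ε^2/(8*(2*K0+1))) = ε^2/8 := by
            field_simp
          linarith
        have hγa := hγ a haN₂
        have hγb := hγ b (le_trans haN₂ hab)
        have hk := hkey a b hab
        have hdist2 : ‖x a - x b‖ ^ 2 < ε ^ 2 := by nlinarith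
        rw [dist_eq_norm]
        nlinarith [norm_nonneg (x a - x b)]
      refine ⟨max N₁ N₂, ?_⟩
      intro a ha b hb
      rcases le_total a b with hab | hab
      · exact key2 a b hab ha
      · rw [dist_comm]
        exact key2 b a hab hb
    obtain ⟨xstar, hxstar⟩ := cauchySeq_tendsto_of_complete hxCauchy
    have htm := MeasureTheory.tendstoInMeasure_of_tendsto_Lp hxstar
    obtain ⟨ns, hnsmono, haes⟩ := htm.exists_seq_tendsto_ae
    have hballae : ∀ᵐ s ∂μ, ∀ k : ℕ, ‖x (ns k) s‖ ≤ Mv :=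
      ae_all_iff.2 fun k => ((hSmem _ _).1 (hxS (ns k))).1
    have hxstarbd : ∀ᵐ s ∂μ, ‖xstar s‖ ≤ Mv := by
      filter_upwards [hballae, haes] with s h1 h2
      exact le_of_tendsto h2.norm (Eventually.of_forall fun k => h1 k)
    have hIconv : Tendsto (fun k => (∫ s, U (T - s) (B ((x (ns k)) s)) ∂μ : H)) atTop
        (𝓝 (∫ s, U (T - s) (B (xstar s)) ∂μ)) := by
      refine tendsto_integral_of_dominated_convergence (fun _ => Mv)
        (fun k => NPAux.aesm_integrand hU B μ (Lp.aestronglyMeasurable _) T)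
        (integrable_const Mv) (fun k => ?_) ?_
      · filter_upwards [((hSmem _ _).1 (hxS (ns k))).1] with s hs
        rw [hUnorm]
        exact (NPAux.orthProj_norm_le hB _).trans hs
      · filter_upwards [haes] with s hs
        exact (((U (T - s)).continuous.comp B.continuous).tendsto _).comp hs
    have hresn : ∀ n : ℕ,
        ‖U T y₀ + (∫ s, U (T - s) (B (xstar s)) ∂μ) - z_d‖ ≤ r + 1/((n:ℝ)+1) := by
      intro n
      have hTend : Tendsto
          (fun k => ‖U T y₀ + (∫ s, U (T - s) (B ((x (ns k)) s)) ∂μ) - z_d‖) atTop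
          (𝓝 ‖U T y₀ + (∫ s, U (T - s) (B (xstar s)) ∂μ) - z_d‖) :=
        ((tendsto_const_nhds.add hIconv).sub tendsto_const_nhds).norm
      refine le_of_tendsto hTend ?_
      filter_upwards [eventually_ge_atTop n] with k hk
      have h1 : n ≤ ns k := le_trans hk hnsmono.le_apply
      exact (((hSmem _ _).1 (hxS (ns k))).2).trans (add_le_add_right (hδle h1) r)
    have hresfin : ‖U T y₀ + (∫ s, U (T - s) (B (xstar s)) ∂μ) - z_d‖ ≤ r := by
      refine le_of_forall_pos_le_add fun ε hε => ?_
      obtain ⟨n, hn⟩ := exists_nat_one_div_lt hε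
      exact (hresn n).trans (by linarith)
    obtain ⟨gsm, hgsm, hgae⟩ := Lp.aestronglyMeasurable xstar
    have hgae' : ∀ᵐ t : ℝ ∂volume, t ∈ Ioo τ T → xstar t = gsm t :=
      (ae_restrict_iff' measurableSet_Ioo).1 hgae
    have hbd_u : ∀ᵐ t : ℝ ∂volume, t ∈ Ioo τ T → ‖xstar t‖ ≤ Mv :=
      (ae_restrict_iff' measurableSet_Ioo).1 hxstarbd
    have hmemae : ∀ᵐ s ∂μ, s ∈ Ioo τ T := by
      rw [hμdef]; exact ae_restrict_mem measurableSet_Ioo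
    have hmeas_u : AEStronglyMeasurable ((Ioo τ T).indicator (fun s => xstar s)) volume := by
      refine ⟨(Ioo τ T).indicator gsm, hgsm.indicator measurableSet_Ioo, ?_⟩
      filter_upwards [hgae'] with t ht
      by_cases hmem : t ∈ Ioo τ T
      · rw [Set.indicator_of_mem hmem, Set.indicator_of_mem hmem, ht hmem]
      · rw [Set.indicator_of_notMem hmem, Set.indicator_of_notMem hmem]
    have humem : (Ioo τ T).indicator (fun s => xstar s) ∈ WadmSet U B y₀ z_d T τ r := by
      refine ⟨⟨hmeas_u, Mv, ?_⟩, ?_⟩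
      · filter_upwards [hbd_u] with t ht _
        by_cases hmem : t ∈ Ioo τ T
        · rw [Set.indicator_of_mem hmem]; exact ht hmem
        · rw [Set.indicator_of_notMem hmem]; simp [hMv.le]
      · have hstu : stateT U B T τ ((Ioo τ T).indicator (fun s => xstar s)) y₀
            = U T y₀ + ∫ s, U (T - s) (B (xstar s)) ∂μ := by
          rw [hstate]
          congr 1
          refine integral_congr_ae ?_
          filter_upwards [hmemae] with s hs
          rw [Set.indicator_of_mem hs]
        rw [hstu]
        exact hresfin
    have hsup_le : supNorm ((Ioo τ T).indicator (fun s => xstar s)) τ T ≤ Mv := by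
      unfold supNorm
      refine csInf_le ⟨0, fun c hc => hc.1⟩ ⟨hMv.le, ?_⟩
      filter_upwards [hbd_u] with t ht hmem
      rw [Set.indicator_of_mem hmem]; exact ht hmem
    refine ⟨_, humem, le_antisymm hsup_le ?_⟩
    rw [hMNP_eq]
    exact csInf_le hbddb ⟨_, humem, rfl⟩
end
end

section
/- Assume hypotheses (EC) and (UC). Let τ ∈ [0,T). Then the map M ↦ r(M,τ) sends [0,M^τ) into (0,r_T], is strictly monotonically decreasing, is Lipschitz continuous with |r(M₁,τ) − r(M₂,τ)| ≤ (T−τ)|M₁−M₂| for all M₁,M₂ ∈ [0,M^τ), and satisfies r(0,τ) = r_T and lim_{M→M^τ} r(M,τ) = 0. -/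
open MeasureTheory Set Filter Topology

noncomputable section

variable {H : Type*} [NormedAddCommGroup H] [InnerProductSpace ℂ H] [CompleteSpace H]
  [SecondCountableTopology H]

set_option linter.unusedSectionVars false

section RopHelpers

variable {U : ℝ → H →L[ℂ] H} {B : H →L[ℂ] H}

lemma orthProj_norm_le (hB : IsOrthProj B) (x : H) : ‖B x‖ ≤ ‖x‖ := by
  obtain ⟨-, hidem, hsa⟩ := hB
  have hBB : B (B x) = B x := DFunLike.congr_fun hidem x
  have h1 : (RCLike.re (inner ℂ (B x) (B x) : ℂ)) = ‖B x‖ ^ 2 := inner_self_eq_norm_sq (B x)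
  have h2 : (inner ℂ (B x) (B x) : ℂ) = inner ℂ x (B x) := by
    rw [hsa x (B x), hBB]
  have h3 : RCLike.re (inner ℂ x (B x) : ℂ) ≤ ‖x‖ * ‖B x‖ :=
    (RCLike.re_le_norm _).trans (norm_inner_le_norm x (B x))
  rw [h2] at h1
  nlinarith [norm_nonneg (B x), norm_nonneg x]

lemma unitary_joint_cont (hU : IsUnitaryGroup U) : Continuous fun p : ℝ × H => U p.1 p.2 := by
  obtain ⟨-, -, hnorm, hcont⟩ := hU
  rw [continuous_iff_continuousAt]
  rintro ⟨t₀, x₀⟩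
  have key : ∀ p : ℝ × H, U p.1 p.2 = U p.1 (p.2 - x₀) + U p.1 x₀ := by
    intro p; rw [map_sub]; abel
  have h1 : Tendsto (fun p : ℝ × H => U p.1 (p.2 - x₀)) (𝓝 (t₀, x₀)) (𝓝 0) := by
    refine squeeze_zero_norm (fun p => le_of_eq (hnorm _ _)) ?_
    have hc : Continuous fun p : ℝ × H => ‖p.2 - x₀‖ :=
      (continuous_snd.sub continuous_const).norm
    simpa using hc.tendsto (t₀, x₀)
  have h2 : Tendsto (fun p : ℝ × H => U p.1 x₀) (𝓝 (t₀, x₀)) (𝓝 (U t₀ x₀)) :=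
    ((hcont x₀).tendsto t₀).comp (continuous_fst.tendsto (t₀, x₀))
  have h3 := h1.add h2
  rw [zero_add] at h3
  have key' : (fun p : ℝ × H => U p.1 p.2)
      = fun p : ℝ × H => U p.1 (p.2 - x₀) + U p.1 x₀ := funext key
  rw [ContinuousAt, key']
  exact h3

lemma integrand_aesm (hU : IsUnitaryGroup U) {u : ℝ → H}
    (hu : AEStronglyMeasurable u (volume : Measure ℝ)) (T : ℝ) :
    AEStronglyMeasurable (fun s : ℝ => U (T - s) (B (u s))) (volume : Measure ℝ) := by
  have hF : Continuous fun p : ℝ × H => U (T - p.1) (B p.2) :=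
    (unitary_joint_cont hU).comp
      ((continuous_const.sub continuous_fst).prodMk (B.continuous.comp continuous_snd))
  exact hF.comp_aestronglyMeasurable (aestronglyMeasurable_id.prodMk hu)

lemma integrand_intOn (hU : IsUnitaryGroup U) (hB : IsOrthProj B) {u : ℝ → H} {c τ T : ℝ}
    (hu : AEStronglyMeasurable u (volume : Measure ℝ))
    (hbd : ∀ᵐ t : ℝ ∂volume, t ∈ Ioo τ T → ‖u t‖ ≤ c) :
    IntegrableOn (fun s : ℝ => U (T - s) (B (u s))) (Ioo τ T) volume := by
  apply Integrable.mono' (g := fun _ => c) (integrableOn_const measure_Ioo_lt_top.ne)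
    ((integrand_aesm hU hu T).restrict)
  rw [ae_restrict_iff' measurableSet_Ioo]
  filter_upwards [hbd] with t ht hmem
  calc ‖U (T - t) (B (u t))‖ = ‖B (u t)‖ := hU.2.2.1 _ _
    _ ≤ ‖u t‖ := orthProj_norm_le hB _
    _ ≤ c := ht hmem

lemma integral_norm_bound (hU : IsUnitaryGroup U) (hB : IsOrthProj B) {u : ℝ → H} {c τ T : ℝ}
    (hτ : τ ≤ T) (hbd : ∀ᵐ t : ℝ ∂volume, t ∈ Ioo τ T → ‖u t‖ ≤ c) :
    ‖∫ s in Ioo τ T, U (T - s) (B (u s))‖ ≤ (T - τ) * c := by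
  have h := norm_setIntegral_le_of_norm_le_const_ae (μ := volume) (s := Ioo τ T) (C := c)
    (f := fun s : ℝ => U (T - s) (B (u s)))
    measure_Ioo_lt_top ?_
  · rw [measureReal_def, Real.volume_Ioo, ENNReal.toReal_ofReal (by linarith)] at h
    linarith [h]
  · rw [ae_restrict_iff' measurableSet_Ioo]
    filter_upwards [hbd] with t ht hmem
    calc ‖U (T - t) (B (u t))‖ = ‖B (u t)‖ := hU.2.2.1 _ _
      _ ≤ ‖u t‖ := orthProj_norm_le hB _
      _ ≤ c := ht hmem

lemma supNorm_nonneg (u : ℝ → H) (a b : ℝ) : 0 ≤ supNorm u a b :=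
  Real.sInf_nonneg fun _ hc => hc.1

lemma supNorm_le {u : ℝ → H} {a b c : ℝ} (hc : 0 ≤ c)
    (h : ∀ᵐ t : ℝ ∂volume, t ∈ Ioo a b → ‖u t‖ ≤ c) : supNorm u a b ≤ c :=
  csInf_le ⟨0, fun _ hx => hx.1⟩ ⟨hc, h⟩

lemma ae_le_supNorm {u : ℝ → H} {a b : ℝ}
    (hne : ∃ c : ℝ, 0 ≤ c ∧ ∀ᵐ t : ℝ ∂volume, t ∈ Ioo a b → ‖u t‖ ≤ c) :
    ∀ᵐ t : ℝ ∂volume, t ∈ Ioo a b → ‖u t‖ ≤ supNorm u a b := by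
  set S := {c : ℝ | 0 ≤ c ∧ ∀ᵐ t : ℝ ∂volume, t ∈ Ioo a b → ‖u t‖ ≤ c} with hS
  have hSne : S.Nonempty := hne
  have key : ∀ n : ℕ, ∃ c ∈ S, c < sInf S + 1 / (n + 1) :=
    fun n => exists_lt_of_csInf_lt hSne (lt_add_of_pos_right _ (by positivity))
  choose c hcS hclt using key
  have h2 : ∀ᵐ t : ℝ ∂volume, ∀ n : ℕ, t ∈ Ioo a b → ‖u t‖ ≤ c n :=
    ae_all_iff.2 fun n => (hcS n).2
  filter_upwards [h2] with t ht hmem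
  have : ∀ ε : ℝ, 0 < ε → ‖u t‖ ≤ sInf S + ε := by
    intro ε hε
    obtain ⟨n, hn⟩ := exists_nat_one_div_lt hε
    exact (ht n hmem).trans ((hclt n).le.trans (by linarith))
  exact le_of_forall_pos_le_add this

end RopHelpers

section RopHelpers2
set_option linter.unusedSectionVars false

variable {U : ℝ → H →L[ℂ] H} {B : H →L[ℂ] H}

lemma steering (hU : IsUnitaryGroup U) (hB : IsOrthProj B) (hEC : EC U B)
    {T τ : ℝ} (hτT : τ < T) :
    ∃ C : ℝ, 0 < C ∧ ∀ z : H, ∃ w : ℝ → H,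
      AEStronglyMeasurable w (volume : Measure ℝ) ∧ (∀ t, t ∉ Ioo τ T → w t = 0) ∧
      (∀ᵐ t : ℝ ∂volume, t ∈ Ioo τ T → ‖w t‖ ≤ C * ‖z‖) ∧
      (∫ s in Ioo τ T, U (T - s) (B (w s))) = z := by
  obtain ⟨C, hC, hst⟩ := hEC (T - τ) (by linarith)
  refine ⟨C, hC, fun z => ?_⟩
  obtain ⟨u', hm', hbd', hst'⟩ := hst 0 z
  have hint : (∫ s in Ioo 0 (T - τ), U (T - τ - s) (B (u' s))) = z := by
    unfold stateT at hst'
    simpa using hst'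
  have hiff : ∀ s : ℝ, s ∈ Ioo τ T ↔ s - τ ∈ Ioo 0 (T - τ) := by
    intro s
    simp only [mem_Ioo]
    constructor <;> rintro ⟨ha, hb⟩ <;> constructor <;> linarith
  set w : ℝ → H := (Ioo τ T).indicator (fun t => u' (t - τ)) with hw
  have hmw : AEStronglyMeasurable w (volume : Measure ℝ) := by
    have hshift : AEStronglyMeasurable (fun t : ℝ => u' (t - τ)) (volume : Measure ℝ) :=
      hm'.comp_quasiMeasurePreserving
        (measurePreserving_sub_right volume τ).quasiMeasurePreserving
    exact hshift.indicator measurableSet_Ioo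
  refine ⟨w, hmw, fun t ht => indicator_of_notMem ht _, ?_, ?_⟩
  · have hbd'' : ∀ᵐ t : ℝ ∂volume, t ∈ Ioo 0 (T - τ) → ‖u' t‖ ≤ C * ‖z‖ := by
      filter_upwards [hbd'] with t ht hmem
      simpa using ht hmem
    have hpull := (measurePreserving_sub_right volume τ).quasiMeasurePreserving.ae hbd''
    filter_upwards [hpull] with t ht hmem
    rw [hw, indicator_of_mem hmem]
    exact ht ((hiff t).1 hmem)
  · have h1 : (∫ s in Ioo τ T, U (T - s) (B (w s)))
        = ∫ s in Ioo τ T, U (T - s) (B (u' (s - τ))) := by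
      refine setIntegral_congr_fun measurableSet_Ioo fun s hs => ?_
      rw [hw, indicator_of_mem hs]
    set g : ℝ → H := fun σ => U (T - τ - σ) (B (u' σ)) with hg
    have h2 : ∀ s : ℝ, (Ioo τ T).indicator (fun s => U (T - s) (B (u' (s - τ)))) s
        = (Ioo 0 (T - τ)).indicator g (s - τ) := by
      intro s
      by_cases hs : s ∈ Ioo τ T
      · rw [indicator_of_mem hs, indicator_of_mem ((hiff s).1 hs)]
        have harg : T - τ - (s - τ) = T - s := by ring
        rw [hg]; simp only; rw [harg]
      · rw [indicator_of_notMem hs, indicator_of_notMem (fun hmem => hs ((hiff s).2 hmem))]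
    rw [h1, ← integral_indicator measurableSet_Ioo]
    calc (∫ s : ℝ, (Ioo τ T).indicator (fun s => U (T - s) (B (u' (s - τ)))) s)
        = ∫ s : ℝ, (Ioo 0 (T - τ)).indicator g (s - τ) := by simp_rw [h2]
      _ = ∫ s : ℝ, (Ioo 0 (T - τ)).indicator g s :=
          integral_sub_right_eq_self ((Ioo 0 (T - τ)).indicator g) τ
      _ = ∫ s in Ioo 0 (T - τ), g s := integral_indicator measurableSet_Ioo
      _ = z := hint

lemma stateT_add' {T τ : ℝ} {y₀ : H} {u w : ℝ → H}
    (hiu : IntegrableOn (fun s : ℝ => U (T - s) (B (u s))) (Ioo τ T) volume)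
    (hiw : IntegrableOn (fun s : ℝ => U (T - s) (B (w s))) (Ioo τ T) volume) :
    stateT U B T τ (u + w) y₀
      = stateT U B T τ u y₀ + ∫ s in Ioo τ T, U (T - s) (B (w s)) := by
  unfold stateT
  have h : ∀ s : ℝ, U (T - s) (B ((u + w) s)) = U (T - s) (B (u s)) + U (T - s) (B (w s)) := by
    intro s; simp [map_add]
  simp_rw [h]
  rw [integral_add hiu hiw]
  abel

lemma stateT_smul' {T τ : ℝ} {y₀ : H} (c : ℝ) (u : ℝ → H) :
    stateT U B T τ (c • u) y₀
      = U T y₀ + c • ∫ s in Ioo τ T, U (T - s) (B (u s)) := by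
  unfold stateT
  congr 1
  rw [← integral_smul]
  refine integral_congr_ae (Eventually.of_forall fun s => ?_)
  simp [ContinuousLinearMap.map_smul_of_tower]

lemma stateT_zero' {T τ : ℝ} {y₀ : H} : stateT U B T τ (0 : ℝ → H) y₀ = U T y₀ := by
  unfold stateT
  have h : ∀ s : ℝ, U (T - s) (B ((0 : ℝ → H) s)) = 0 := by intro s; simp
  simp_rw [h, integral_zero, add_zero]

end RopHelpers2

section RopHelpers3
set_option linter.unusedSectionVars false

variable {U : ℝ → H →L[ℂ] H} {B : H →L[ℂ] H} {y₀ z_d : H} {T τ : ℝ}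

lemma zero_mem_UadmSet {M : ℝ} (hM : 0 ≤ M) : (0 : ℝ → H) ∈ UadmSet (H := H) M τ T := by
  refine ⟨⟨aestronglyMeasurable_const, 0, Eventually.of_forall fun t _ => by simp⟩, ?_⟩
  exact Eventually.of_forall fun t _ => by simpa using hM

lemma Uadm_intOn (hU : IsUnitaryGroup U) (hB : IsOrthProj B) {M : ℝ} {u : ℝ → H}
    (hu : u ∈ UadmSet M τ T) :
    IntegrableOn (fun s : ℝ => U (T - s) (B (u s))) (Ioo τ T) volume :=
  integrand_intOn hU hB hu.1.1 hu.2

lemma rOP_bddBelow :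
    BddBelow ((fun u : ℝ → H => ‖stateT U B T τ u y₀ - z_d‖) '' UadmSet M τ T) :=
  ⟨0, by rintro x ⟨u, -, rfl⟩; positivity⟩

lemma rOP_nonneg (M : ℝ) : 0 ≤ rOP U B y₀ z_d T M τ :=
  Real.sInf_nonneg (by rintro x ⟨u, -, rfl⟩; positivity)

lemma rOP_le {M : ℝ} {u : ℝ → H} (hu : u ∈ UadmSet M τ T) :
    rOP U B y₀ z_d T M τ ≤ ‖stateT U B T τ u y₀ - z_d‖ :=
  csInf_le rOP_bddBelow ⟨u, hu, rfl⟩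

lemma rOP_le_rT {M : ℝ} (hM : 0 ≤ M) :
    rOP U B y₀ z_d T M τ ≤ ‖U T y₀ - z_d‖ := by
  have h := rOP_le (U := U) (B := B) (y₀ := y₀) (z_d := z_d) (T := T) (τ := τ)
    (zero_mem_UadmSet hM)
  rwa [stateT_zero'] at h

lemma le_rOP {M a : ℝ} (hM : 0 ≤ M)
    (h : ∀ u ∈ UadmSet (H := H) M τ T, a ≤ ‖stateT U B T τ u y₀ - z_d‖) :
    a ≤ rOP U B y₀ z_d T M τ :=
  le_csInf ⟨_, ⟨0, zero_mem_UadmSet hM, rfl⟩⟩ (by rintro b ⟨u, hu, rfl⟩; exact h u hu)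

lemma rOP_anti {M₁ M₂ : ℝ} (hM₁ : 0 ≤ M₁) (h12 : M₁ ≤ M₂) :
    rOP U B y₀ z_d T M₂ τ ≤ rOP U B y₀ z_d T M₁ τ := by
  refine csInf_le_csInf rOP_bddBelow ⟨_, ⟨0, zero_mem_UadmSet hM₁, rfl⟩⟩ ?_
  rintro b ⟨u, ⟨hmem, hbd⟩, rfl⟩
  exact ⟨u, ⟨hmem, hbd.mono fun t ht hmem' => (ht hmem').trans h12⟩, rfl⟩

lemma exact_set_nonempty (hU : IsUnitaryGroup U) (hB : IsOrthProj B) (hEC : EC U B)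
    (hτ0 : 0 ≤ τ) (hτT : τ < T) :
    ∃ u : ℝ → H, (MemLinfty u 0 T ∧ stateT U B T τ u y₀ = z_d) := by
  obtain ⟨C, hC, hst⟩ := steering hU hB hEC hτT
  obtain ⟨w, hmw, hw0, hwbd, hwint⟩ := hst (z_d - U T y₀)
  refine ⟨w, ⟨hmw, max (C * ‖z_d - U T y₀‖) 0, ?_⟩, ?_⟩
  · filter_upwards [hwbd] with t ht _
    by_cases htw : t ∈ Ioo τ T
    · exact (ht htw).trans (le_max_left _ _)
    · rw [hw0 t htw]; simp
  · unfold stateT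
    rw [hwint]
    abel

lemma Mtau_ge (hU : IsUnitaryGroup U) (hB : IsOrthProj B) (hEC : EC U B)
    (hτ0 : 0 ≤ τ) (hτT : τ < T) :
    ‖U T y₀ - z_d‖ / (T - τ) ≤ Mtau U B y₀ z_d T τ := by
  obtain ⟨u₀, hu₀⟩ := exact_set_nonempty (U := U) (B := B) (y₀ := y₀) (z_d := z_d)
    hU hB hEC hτ0 hτT
  refine le_csInf ⟨_, ⟨u₀, hu₀, rfl⟩⟩ ?_
  rintro b ⟨u, ⟨⟨hm, c, hc⟩, hsteer⟩, rfl⟩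
  have hSne : ∃ c' : ℝ, 0 ≤ c' ∧ ∀ᵐ t : ℝ ∂volume, t ∈ Ioo τ T → ‖u t‖ ≤ c' := by
    refine ⟨max c 0, le_max_right _ _, ?_⟩
    filter_upwards [hc] with t ht hmem
    exact (ht (Ioo_subset_Ioo hτ0 le_rfl hmem)).trans (le_max_left _ _)
  have haebd := ae_le_supNorm (u := u) (a := τ) (b := T) hSne
  have hint_eq : (∫ s in Ioo τ T, U (T - s) (B (u s))) = z_d - U T y₀ := by
    have := hsteer
    unfold stateT at this
    have h2 : U T y₀ + (∫ s in Ioo τ T, U (T - s) (B (u s))) = z_d := this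
    linear_combination (norm := abel) h2 - (U T) y₀
  have hbd := integral_norm_bound hU hB hτT.le haebd
  rw [hint_eq] at hbd
  rw [div_le_iff₀ (by linarith)]
  calc ‖U T y₀ - z_d‖ = ‖z_d - U T y₀‖ := norm_sub_rev _ _
    _ ≤ (T - τ) * supNorm u τ T := hbd
    _ = supNorm u τ T * (T - τ) := mul_comm _ _

lemma Mtau_pos (hU : IsUnitaryGroup U) (hB : IsOrthProj B) (hEC : EC U B)
    (hrT : 0 < ‖U T y₀ - z_d‖) (hτ0 : 0 ≤ τ) (hτT : τ < T) :
    0 < Mtau U B y₀ z_d T τ :=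
  lt_of_lt_of_le (div_pos hrT (by linarith)) (Mtau_ge hU hB hEC hτ0 hτT)

lemma rOP_pos (hU : IsUnitaryGroup U) (hB : IsOrthProj B) (hEC : EC U B)
    (hτ0 : 0 ≤ τ) (hτT : τ < T) {M : ℝ}
    (hM : M ∈ Ico (0 : ℝ) (Mtau U B y₀ z_d T τ)) :
    0 < rOP U B y₀ z_d T M τ := by
  rcases (rOP_nonneg (U := U) (B := B) (y₀ := y₀) (z_d := z_d) (T := T) (τ := τ) M).lt_or_eq
    with h | h
  · exact h
  exfalso
  obtain ⟨C, hC, hst⟩ := steering hU hB hEC hτT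
  have key : ∀ ε : ℝ, 0 < ε → Mtau U B y₀ z_d T τ ≤ M + C * ε := by
    intro ε hε
    have hlt : rOP U B y₀ z_d T M τ < ε := h ▸ hε
    unfold rOP at hlt
    have hne : ((fun u : ℝ → H => ‖stateT U B T τ u y₀ - z_d‖) '' UadmSet M τ T).Nonempty :=
      ⟨_, mem_image_of_mem _ (zero_mem_UadmSet hM.1)⟩
    obtain ⟨b, ⟨u, hu, rfl⟩, hbε⟩ := exists_lt_of_csInf_lt hne hlt
    obtain ⟨w, hmw, hw0, hwbd, hwint⟩ := hst (z_d - stateT U B T τ u y₀)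
    have hznorm : ‖z_d - stateT U B T τ u y₀‖ = ‖stateT U B T τ u y₀ - z_d‖ := norm_sub_rev _ _
    have hiu := Uadm_intOn hU hB hu
    have hiw : IntegrableOn (fun s : ℝ => U (T - s) (B (w s))) (Ioo τ T) volume :=
      integrand_intOn hU hB hmw hwbd
    have hsteer : stateT U B T τ (u + w) y₀ = z_d := by
      rw [stateT_add' hiu hiw, hwint]; abel
    have hmemL : MemLinfty (u + w) 0 T := by
      obtain ⟨⟨hm, c, hc⟩, hbdM⟩ := hu
      refine ⟨hm.add hmw, c + max (C * ‖z_d - stateT U B T τ u y₀‖) 0, ?_⟩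
      filter_upwards [hc, hwbd] with t ht hw hmem
      by_cases htw : t ∈ Ioo τ T
      · calc ‖(u + w) t‖ ≤ ‖u t‖ + ‖w t‖ := norm_add_le _ _
          _ ≤ c + max (C * ‖z_d - stateT U B T τ u y₀‖) 0 :=
            add_le_add (ht hmem) ((hw htw).trans (le_max_left _ _))
      · calc ‖(u + w) t‖ = ‖u t + w t‖ := rfl
          _ = ‖u t‖ := by rw [hw0 t htw]; simp
          _ ≤ c + max (C * ‖z_d - stateT U B T τ u y₀‖) 0 := by
              have := ht hmem; have := le_max_right (C * ‖z_d - stateT U B T τ u y₀‖) 0; linarith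
    have hMle : Mtau U B y₀ z_d T τ ≤ supNorm (u + w) τ T :=
      csInf_le ⟨0, by rintro x ⟨v, -, rfl⟩; exact supNorm_nonneg v τ T⟩ ⟨u + w, ⟨hmemL, hsteer⟩, rfl⟩
    have hsup : supNorm (u + w) τ T ≤ M + C * ε := by
      refine supNorm_le (add_nonneg hM.1 (by positivity)) ?_
      filter_upwards [hu.2, hwbd] with t htu htw hmem
      calc ‖(u + w) t‖ ≤ ‖u t‖ + ‖w t‖ := norm_add_le _ _
        _ ≤ M + C * ‖z_d - stateT U B T τ u y₀‖ := add_le_add (htu hmem) (htw hmem)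
        _ ≤ M + C * ε := by
            rw [hznorm]
            have := mul_le_mul_of_nonneg_left hbε.le hC.le
            linarith
    linarith
  have hfin : Mtau U B y₀ z_d T τ ≤ M := by
    refine le_of_forall_pos_le_add fun ε hε => ?_
    have := key (ε / C) (by positivity)
    rw [mul_div_cancel₀ _ hC.ne'] at this
    exact this
  exact absurd hM.2 (not_lt.2 hfin)

end RopHelpers3

section RopHelpers4
set_option linter.unusedSectionVars false

variable {U : ℝ → H →L[ℂ] H} {B : H →L[ℂ] H} {y₀ z_d : H} {T τ : ℝ}

lemma rOP_lip (hU : IsUnitaryGroup U) (hB : IsOrthProj B) (hτT : τ < T)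
    {M₁ M₂ : ℝ} (h2 : 0 ≤ M₂) (h12 : M₂ ≤ M₁) :
    rOP U B y₀ z_d T M₂ τ ≤ rOP U B y₀ z_d T M₁ τ + (T - τ) * (M₁ - M₂) := by
  rcases eq_or_lt_of_le (h2.trans h12) with h0 | hM1
  · have hM2 : M₂ = 0 := le_antisymm (h12.trans h0.symm.le) h2
    rw [← h0, hM2]
    simp
  · set c := M₂ / M₁ with hc
    have hc0 : 0 ≤ c := div_nonneg h2 hM1.le
    have hc1 : c ≤ 1 := div_le_one_of_le₀ h12 hM1.le
    have hcM : c * M₁ = M₂ := div_mul_cancel₀ M₂ hM1.ne'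
    have key : ∀ b ∈ ((fun u : ℝ → H => ‖stateT U B T τ u y₀ - z_d‖) '' UadmSet M₁ τ T),
        rOP U B y₀ z_d T M₂ τ - (T - τ) * (M₁ - M₂) ≤ b := by
      rintro b ⟨u, hu, rfl⟩
      obtain ⟨cu, hcu⟩ := hu.1.2
      have hmem2 : c • u ∈ UadmSet (H := H) M₂ τ T := by
        refine ⟨⟨hu.1.1.const_smul c, c * cu, ?_⟩, ?_⟩
        · filter_upwards [hcu] with t ht hmem
          rw [Pi.smul_apply, norm_smul, Real.norm_of_nonneg hc0]
          exact mul_le_mul_of_nonneg_left (ht hmem) hc0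
        · filter_upwards [hu.2] with t ht hmem
          rw [Pi.smul_apply, norm_smul, Real.norm_of_nonneg hc0]
          calc c * ‖u t‖ ≤ c * M₁ := mul_le_mul_of_nonneg_left (ht hmem) hc0
            _ = M₂ := hcM
      have hdist : ‖stateT U B T τ (c • u) y₀ - stateT U B T τ u y₀‖ ≤ (T - τ) * (M₁ - M₂) := by
        have he : stateT U B T τ (c • u) y₀ - stateT U B T τ u y₀
            = (c - 1) • ∫ s in Ioo τ T, U (T - s) (B (u s)) := by
          rw [stateT_smul']
          unfold stateT
          module
        rw [he, norm_smul, Real.norm_eq_abs, abs_of_nonpos (by linarith)]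
        have hbI := integral_norm_bound hU hB hτT.le hu.2
        calc -(c - 1) * ‖∫ s in Ioo τ T, U (T - s) (B (u s))‖
            = (1 - c) * ‖∫ s in Ioo τ T, U (T - s) (B (u s))‖ := by ring_nf
          _ ≤ (1 - c) * ((T - τ) * M₁) := mul_le_mul_of_nonneg_left hbI (by linarith)
          _ = (T - τ) * (M₁ - M₂) := by rw [← hcM]; ring
      have h1 := rOP_le (U := U) (B := B) (y₀ := y₀) (z_d := z_d) (T := T) (τ := τ) hmem2
      have h2' : ‖stateT U B T τ (c • u) y₀ - z_d‖
          ≤ ‖stateT U B T τ u y₀ - z_d‖ + (T - τ) * (M₁ - M₂) := by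
        calc ‖stateT U B T τ (c • u) y₀ - z_d‖ = dist (stateT U B T τ (c • u) y₀) z_d :=
              (dist_eq_norm _ _).symm
          _ ≤ dist (stateT U B T τ (c • u) y₀) (stateT U B T τ u y₀)
              + dist (stateT U B T τ u y₀) z_d := dist_triangle _ _ _
          _ = ‖stateT U B T τ (c • u) y₀ - stateT U B T τ u y₀‖
              + ‖stateT U B T τ u y₀ - z_d‖ := by rw [dist_eq_norm, dist_eq_norm]
          _ ≤ _ := by linarith
      linarith
    have hfin : rOP U B y₀ z_d T M₂ τ - (T - τ) * (M₁ - M₂) ≤ rOP U B y₀ z_d T M₁ τ :=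
      le_csInf ⟨_, mem_image_of_mem _ (zero_mem_UadmSet (h2.trans h12))⟩ key
    linarith

lemma rOP_strictAnti (hU : IsUnitaryGroup U) (hB : IsOrthProj B) (hEC : EC U B)
    (hτ0 : 0 ≤ τ) (hτT : τ < T) {M₁ M₂ : ℝ}
    (h1 : M₁ ∈ Ico (0 : ℝ) (Mtau U B y₀ z_d T τ)) (h12 : M₁ < M₂)
    (h2 : M₂ ∈ Ico (0 : ℝ) (Mtau U B y₀ z_d T τ)) :
    rOP U B y₀ z_d T M₂ τ < rOP U B y₀ z_d T M₁ τ := by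
  have hr₁ : 0 < rOP U B y₀ z_d T M₁ τ := rOP_pos hU hB hEC hτ0 hτT h1
  set r₁ := rOP U B y₀ z_d T M₁ τ with hr
  obtain ⟨C, hC, hst⟩ := steering hU hB hEC hτT
  set θ := min (1/2 : ℝ) ((M₂ - M₁) / (C * (r₁ + 1))) with hθ
  have hθ0 : 0 < θ := lt_min (by norm_num) (div_pos (by linarith) (by positivity))
  have hθ1 : θ ≤ 1/2 := min_le_left _ _
  have hθle : θ * (C * (r₁ + 1)) ≤ M₂ - M₁ := by
    calc θ * (C * (r₁ + 1)) ≤ ((M₂ - M₁) / (C * (r₁ + 1))) * (C * (r₁ + 1)) :=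
          mul_le_mul_of_nonneg_right (min_le_right _ _) (by positivity)
      _ = M₂ - M₁ := div_mul_cancel₀ _ (by positivity)
  set ε := min 1 (θ * r₁ / 2) with hε
  have hε0 : 0 < ε := lt_min one_pos (by positivity)
  have hε1 : ε ≤ 1 := min_le_left _ _
  have hεθ : ε ≤ θ * r₁ / 2 := min_le_right _ _
  have hlt : sInf ((fun u : ℝ → H => ‖stateT U B T τ u y₀ - z_d‖) '' UadmSet M₁ τ T)
      < r₁ + ε := by
    have h : rOP U B y₀ z_d T M₁ τ < r₁ + ε := by rw [← hr]; linarith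
    exact h
  obtain ⟨b, ⟨u, hu, rfl⟩, hbe⟩ :=
    exists_lt_of_csInf_lt ⟨_, mem_image_of_mem _ (zero_mem_UadmSet h1.1)⟩ hlt
  have hd_ge : r₁ ≤ ‖stateT U B T τ u y₀ - z_d‖ := by rw [hr]; exact rOP_le hu
  have hd_lt : ‖stateT U B T τ u y₀ - z_d‖ < r₁ + ε := hbe
  set d := ‖stateT U B T τ u y₀ - z_d‖ with hd
  obtain ⟨w, hmw, hw0, hwbd, hwint⟩ := hst (θ • (z_d - stateT U B T τ u y₀))
  have hznorm : ‖θ • (z_d - stateT U B T τ u y₀)‖ = θ * d := by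
    rw [norm_smul, Real.norm_of_nonneg hθ0.le, norm_sub_rev]
  rw [hznorm] at hwbd
  have hCθd : C * (θ * d) ≤ M₂ - M₁ := by
    have hd1 : d < r₁ + 1 := by linarith
    have hdd : θ * d ≤ θ * (r₁ + 1) := mul_le_mul_of_nonneg_left hd1.le hθ0.le
    calc C * (θ * d) ≤ C * (θ * (r₁ + 1)) := mul_le_mul_of_nonneg_left hdd hC.le
      _ = θ * (C * (r₁ + 1)) := by ring
      _ ≤ M₂ - M₁ := hθle
  have hiu := Uadm_intOn hU hB hu
  have hiw := integrand_intOn hU hB hmw hwbd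
  have hmem2 : u + w ∈ UadmSet (H := H) M₂ τ T := by
    obtain ⟨cu, hcu⟩ := hu.1.2
    refine ⟨⟨hu.1.1.add hmw, cu + max (C * (θ * d)) 0, ?_⟩, ?_⟩
    · filter_upwards [hcu, hwbd] with t htu htw hmem
      by_cases htio : t ∈ Ioo τ T
      · exact (norm_add_le _ _).trans
          (add_le_add (htu hmem) ((htw htio).trans (le_max_left _ _)))
      · have heq : (u + w) t = u t := by simp [hw0 t htio]
        rw [heq]
        have := le_max_right (C * (θ * d)) 0
        linarith [htu hmem]
    · filter_upwards [hu.2, hwbd] with t htu htw hmem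
      calc ‖(u + w) t‖ ≤ ‖u t‖ + ‖w t‖ := norm_add_le _ _
        _ ≤ M₁ + C * (θ * d) := add_le_add (htu hmem) (htw hmem)
        _ ≤ M₂ := by linarith
  have hstate : stateT U B T τ (u + w) y₀ - z_d = (1 - θ) • (stateT U B T τ u y₀ - z_d) := by
    rw [stateT_add' hiu hiw, hwint]
    module
  have hle : rOP U B y₀ z_d T M₂ τ ≤ (1 - θ) * d := by
    have h := rOP_le (U := U) (B := B) (y₀ := y₀) (z_d := z_d) (T := T) (τ := τ) hmem2
    rw [hstate, norm_smul, Real.norm_eq_abs, abs_of_nonneg (by linarith : (0:ℝ) ≤ 1 - θ)] at h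
    exact h
  have hfinal : (1 - θ) * d < r₁ := by nlinarith
  linarith

lemma rOP_zero_eq (hτT : τ < T) :
    rOP U B y₀ z_d T 0 τ = ‖U T y₀ - z_d‖ := by
  refine le_antisymm (rOP_le_rT le_rfl) ?_
  refine le_rOP le_rfl fun u hu => ?_
  have hint : (∫ s in Ioo τ T, U (T - s) (B (u s))) = 0 := by
    refine integral_eq_zero_of_ae ?_
    rw [EventuallyEq, ae_restrict_iff' measurableSet_Ioo]
    filter_upwards [hu.2] with t ht hmem
    have h0 : u t = 0 := norm_le_zero_iff.1 (ht hmem)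
    simp [h0]
  have hs : stateT U B T τ u y₀ = U T y₀ := by unfold stateT; rw [hint, add_zero]
  rw [hs]

lemma rOP_tendsto (hU : IsUnitaryGroup U) (hB : IsOrthProj B) (hEC : EC U B)
    (hrT : 0 < ‖U T y₀ - z_d‖) (hτ0 : 0 ≤ τ) (hτT : τ < T) :
    Tendsto (fun M => rOP U B y₀ z_d T M τ) (𝓝[<] (Mtau U B y₀ z_d T τ)) (𝓝 0) := by
  have hMt0 : 0 < Mtau U B y₀ z_d T τ := Mtau_pos hU hB hEC hrT hτ0 hτT
  set Mt := Mtau U B y₀ z_d T τ with hMtdef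
  set rT := ‖U T y₀ - z_d‖ with hrTdef
  rw [Metric.tendsto_nhds]
  intro ε hε
  set η := min (Mt / 2) (ε * Mt / (4 * (rT + 1))) with hη
  have hη0 : 0 < η := lt_min (by linarith) (by positivity)
  have hη1 : η ≤ Mt / 2 := min_le_left _ _
  have hη2 : 4 * (rT + 1) * η ≤ ε * Mt := by
    have hmr : η ≤ ε * Mt / (4 * (rT + 1)) := min_le_right _ _
    have := (le_div_iff₀ (by positivity : (0:ℝ) < 4 * (rT + 1))).1 hmr
    linarith
  have hne : ((fun u : ℝ → H => supNorm u τ T) ''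
      {u : ℝ → H | MemLinfty u 0 T ∧ stateT U B T τ u y₀ = z_d}).Nonempty := by
    obtain ⟨u₀, hu₀⟩ := exact_set_nonempty (U := U) (B := B) (y₀ := y₀) (z_d := z_d)
      hU hB hEC hτ0 hτT
    exact ⟨_, mem_image_of_mem _ hu₀⟩
  have hMlt : sInf ((fun u : ℝ → H => supNorm u τ T) ''
      {u : ℝ → H | MemLinfty u 0 T ∧ stateT U B T τ u y₀ = z_d}) < Mt + η := by
    have h : Mtau U B y₀ z_d T τ < Mt + η := by rw [← hMtdef]; linarith
    exact h
  obtain ⟨N', ⟨u, hu, rfl⟩, hN⟩ := exists_lt_of_csInf_lt hne hMlt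
  have hNge : Mt ≤ supNorm u τ T := by
    rw [hMtdef]
    exact csInf_le ⟨0, by rintro x ⟨v, -, rfl⟩; exact supNorm_nonneg v τ T⟩
      (mem_image_of_mem _ hu)
  have hN0 : 0 < supNorm u τ T := lt_of_lt_of_le hMt0 hNge
  have haebd : ∀ᵐ t : ℝ ∂volume, t ∈ Ioo τ T → ‖u t‖ ≤ supNorm u τ T := by
    apply ae_le_supNorm
    obtain ⟨c, hc⟩ := hu.1.2
    exact ⟨max c 0, le_max_right _ _, by
      filter_upwards [hc] with t ht hmem
      exact (ht (Ioo_subset_Ioo hτ0 le_rfl hmem)).trans (le_max_left _ _)⟩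
  have hint_eq : (∫ s in Ioo τ T, U (T - s) (B (u s))) = z_d - U T y₀ := by
    have h2 : U T y₀ + (∫ s in Ioo τ T, U (T - s) (B (u s))) = z_d := hu.2
    exact eq_sub_of_add_eq' h2
  have hev : Ioo (Mt - η) Mt ∈ 𝓝[<] Mt := Ioo_mem_nhdsLT_of_mem ⟨by linarith, le_rfl⟩
  filter_upwards [hev] with M hM
  have hM0 : 0 ≤ M := by have := hM.1; linarith
  set N := supNorm u τ T with hNdef
  set q := M / N with hq
  have hq0 : 0 ≤ q := div_nonneg hM0 hN0.le
  have hqN : q * N = M := div_mul_cancel₀ _ hN0.ne'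
  have hq1 : q ≤ 1 := div_le_one_of_le₀ (hM.2.le.trans hNge) hN0.le
  have hmemq : q • u ∈ UadmSet (H := H) M τ T := by
    obtain ⟨c, hc⟩ := hu.1.2
    refine ⟨⟨hu.1.1.const_smul q, q * c, ?_⟩, ?_⟩
    · filter_upwards [hc] with t ht hmem
      rw [Pi.smul_apply, norm_smul, Real.norm_of_nonneg hq0]
      exact mul_le_mul_of_nonneg_left (ht hmem) hq0
    · filter_upwards [haebd] with t ht hmem
      rw [Pi.smul_apply, norm_smul, Real.norm_of_nonneg hq0]
      calc q * ‖u t‖ ≤ q * N := mul_le_mul_of_nonneg_left (ht hmem) hq0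
        _ = M := hqN
  have hstateq : stateT U B T τ (q • u) y₀ - z_d = (1 - q) • (U T y₀ - z_d) := by
    rw [stateT_smul', hint_eq]
    module
  have hrle : rOP U B y₀ z_d T M τ ≤ (1 - q) * rT := by
    have h := rOP_le (U := U) (B := B) (y₀ := y₀) (z_d := z_d) (T := T) (τ := τ) hmemq
    rw [hstateq, norm_smul, Real.norm_eq_abs, abs_of_nonneg (by linarith : (0:ℝ) ≤ 1 - q)] at h
    exact h
  rw [Real.dist_eq, sub_zero, abs_of_nonneg (rOP_nonneg M)]
  have hq_lb : (1 - q) * N ≤ 2 * η := by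
    have hNM : N - M < 2 * η := by
      have := hM.1
      linarith
    have : (1 - q) * N = N - M := by rw [sub_mul, one_mul, hqN]
    linarith
  have hfin : (1 - q) * rT < ε := by
    have hAMt : (1 - q) * Mt ≤ (1 - q) * N := mul_le_mul_of_nonneg_left hNge (by linarith)
    nlinarith [mul_pos hMt0 hε]
  linarith
end RopHelpers4
theorem rop_map_properties
    (U : ℝ → H →L[ℂ] H) (B : H →L[ℂ] H) (hU : IsUnitaryGroup U) (hB : IsOrthProj B)
    (hEC : EC U B) (hECrev : EC (fun t => U (-t)) B)
    (hUC : UC U B)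
    (T : ℝ) (hT : 0 < T) (y₀ z_d : H) (hrT : 0 < ‖U T y₀ - z_d‖)
    (τ : ℝ) (hτ : τ ∈ Ico (0 : ℝ) T) :
    (∀ M ∈ Ico (0 : ℝ) (Mtau U B y₀ z_d T τ),
      rOP U B y₀ z_d T M τ ∈ Ioc (0 : ℝ) ‖U T y₀ - z_d‖) ∧
    StrictAntiOn (fun M => rOP U B y₀ z_d T M τ) (Ico (0 : ℝ) (Mtau U B y₀ z_d T τ)) ∧
    (∀ M₁ ∈ Ico (0 : ℝ) (Mtau U B y₀ z_d T τ), ∀ M₂ ∈ Ico (0 : ℝ) (Mtau U B y₀ z_d T τ),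
      |rOP U B y₀ z_d T M₁ τ - rOP U B y₀ z_d T M₂ τ| ≤ (T - τ) * |M₁ - M₂|) ∧
    rOP U B y₀ z_d T 0 τ = ‖U T y₀ - z_d‖ ∧
    Tendsto (fun M => rOP U B y₀ z_d T M τ) (𝓝[<] (Mtau U B y₀ z_d T τ)) (𝓝 0) := by
  obtain ⟨hτ0, hτT⟩ := hτ
  refine ⟨?_, ?_, ?_, ?_, ?_⟩
  · intro M hM
    exact ⟨rOP_pos hU hB hEC hτ0 hτT hM, rOP_le_rT hM.1⟩
  · intro M₁ h1 M₂ h2 h12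
    exact rOP_strictAnti hU hB hEC hτ0 hτT h1 h12 h2
  · intro M₁ h1 M₂ h2
    rcases le_total M₁ M₂ with h | h
    · have ha := rOP_anti (U := U) (B := B) (y₀ := y₀) (z_d := z_d) (T := T) (τ := τ) h1.1 h
      have hl := rOP_lip (U := U) (B := B) (y₀ := y₀) (z_d := z_d) hU hB hτT h1.1 h
      rw [abs_of_nonneg (by linarith : 0 ≤ rOP U B y₀ z_d T M₁ τ - rOP U B y₀ z_d T M₂ τ),
        abs_of_nonpos (by linarith : M₁ - M₂ ≤ 0)]
      nlinarith
    · have ha := rOP_anti (U := U) (B := B) (y₀ := y₀) (z_d := z_d) (T := T) (τ := τ) h2.1 h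
      have hl := rOP_lip (U := U) (B := B) (y₀ := y₀) (z_d := z_d) hU hB hτT h2.1 h
      rw [abs_of_nonpos (by linarith : rOP U B y₀ z_d T M₁ τ - rOP U B y₀ z_d T M₂ τ ≤ 0),
        abs_of_nonneg (by linarith : 0 ≤ M₁ - M₂)]
      nlinarith
  · exact rOP_zero_eq hτT
  · exact rOP_tendsto hU hB hEC hrT hτ0 hτT
end
end
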